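/- arXiv:1505.02456 — 2 statements merged into one kernel-verified Lean document; each statement's English description precedes it below -/
import Mathlib

section
/- If W is the symmetric edge matrix (with unit diagonal) of an undirected graph on d nodes, then (d+1)I − W is invertible with nonnegative inverse, and In[((d+1)I − W)⁻¹] has (i,j) entry 1 if and only if nodes i and j are in the same connected component of the graph. -/
attribute [local instance] Matrix.linftyOpNormedRing Matrix.linftyOpNormedAlgebra
  Matrix.linftyOpNormedSpace

local instance matrixCompleteSpace {m n : Type*} [Fintype m] [Fintype n] :
    CompleteSpace (Matrix m n ℝ) :=
  FiniteDimensional.complete ℝ _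

/-- For the symmetric edge matrix `W` (unit diagonal) of an undirected graph on
`d` nodes, `(d+1)I − W` is invertible with nonnegative inverse, and the
indicator `In[((d+1)I − W)⁻¹]` has `(i,j)` entry `1` (equivalently, the
`(i,j)` entry of the inverse is positive) iff `i` and `j` lie in the same
connected component of the graph. -/
theorem m_matrix_connected_components {d : ℕ} (W : Matrix (Fin d) (Fin d) ℝ)
    (hsym : ∀ i j, W i j = W j i)
    (hdiag : ∀ i, W i i = 1)
    (hbin : ∀ i j, W i j = 0 ∨ W i j = 1) :
    IsUnit (((d : ℝ) + 1) • (1 : Matrix (Fin d) (Fin d) ℝ) - W) ∧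
      (∀ i j, 0 ≤ (((d : ℝ) + 1) • (1 : Matrix (Fin d) (Fin d) ℝ) - W)⁻¹ i j) ∧
      (∀ i j, 0 < (((d : ℝ) + 1) • (1 : Matrix (Fin d) (Fin d) ℝ) - W)⁻¹ i j ↔
        Relation.ReflTransGen (fun p q => W p q = 1) i j) := by
  classical
  have hd1 : (0:ℝ) < (d:ℝ) + 1 := by positivity
  set c : ℝ := ((d:ℝ) + 1)⁻¹ with hc
  have hc0 : 0 < c := by positivity
  have hWnn : ∀ i j, 0 ≤ W i j := by
    intro i j; rcases hbin i j with h | h <;> simp [h]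
  have hWle : ∀ i j, W i j ≤ 1 := by
    intro i j; rcases hbin i j with h | h <;> simp [h]
  -- powers of W have nonnegative entries
  have hpow_nn : ∀ n (i j : Fin d), 0 ≤ (W ^ n) i j := by
    intro n
    induction n with
    | zero => intro i j; by_cases h : i = j <;> simp [Matrix.one_apply, h]
    | succ n ih =>
      intro i j
      rw [pow_succ, Matrix.mul_apply]
      exact Finset.sum_nonneg fun k _ => mul_nonneg (ih i k) (hWnn k j)
  set T : Matrix (Fin d) (Fin d) ℝ := c • W with hT
  have hnormW : ‖W‖ ≤ (d:ℝ) := by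
    rw [Matrix.linfty_opNorm_def]
    have : ((Finset.univ : Finset (Fin d)).sup fun i : Fin d => ∑ j, ‖W i j‖₊) ≤ (d : NNReal) := by
      apply Finset.sup_le
      intro i _
      calc ∑ j, ‖W i j‖₊ ≤ ∑ _j : Fin d, 1 := by
            apply Finset.sum_le_sum
            intro j _
            rcases hbin i j with h | h <;> simp [h]
        _ = (d : NNReal) := by simp
    exact_mod_cast this
  have hnormT : ‖T‖ < 1 := by
    have h1 : ‖T‖ ≤ ‖c‖ * ‖W‖ := norm_smul_le c W
    have h2 : ‖c‖ = c := by rw [Real.norm_eq_abs, abs_of_pos hc0]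
    have h3 : c * (d:ℝ) < 1 := by
      rw [hc, inv_mul_lt_iff₀ hd1]
      linarith
    calc ‖T‖ ≤ ‖c‖ * ‖W‖ := h1
      _ = c * ‖W‖ := by rw [h2]
      _ ≤ c * (d:ℝ) := by
          exact mul_le_mul_of_nonneg_left hnormW hc0.le
      _ < 1 := h3
  have hsummable : Summable fun n : ℕ => T ^ n := summable_geometric_of_norm_lt_one hnormT
  set S : Matrix (Fin d) (Fin d) ℝ := ∑' n : ℕ, T ^ n with hS
  set A : Matrix (Fin d) (Fin d) ℝ := ((d : ℝ) + 1) • (1 : Matrix (Fin d) (Fin d) ℝ) - W with hA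
  set B : Matrix (Fin d) (Fin d) ℝ := c • S with hB
  have hcd : c * ((d:ℝ) + 1) = 1 := inv_mul_cancel₀ (by positivity)
  have hdc : ((d:ℝ) + 1) * c = 1 := by rw [mul_comm]; exact hcd
  have hAfact : A = ((d:ℝ) + 1) • (1 - T) := by
    rw [hA, hT, smul_sub, smul_smul, mul_inv_cancel₀ (by positivity : ((d:ℝ)+1) ≠ 0), one_smul]
  have hAB : A * B = 1 := by
    rw [hAfact, hB, Matrix.smul_mul, Matrix.mul_smul, smul_smul, hdc, one_smul, hS]
    exact mul_neg_geom_series T hnormT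
  have hBA : B * A = 1 := by
    rw [hB, hAfact, Matrix.smul_mul, Matrix.mul_smul, smul_smul, hcd, one_smul, hS]
    exact geom_series_mul_neg T hnormT
  have hUnit : IsUnit A := ⟨⟨A, B, hAB, hBA⟩, rfl⟩
  have hinv : A⁻¹ = B := Matrix.inv_eq_right_inv hAB
  -- entrywise sum
  have hEntry : ∀ i j : Fin d, HasSum (fun n : ℕ => (T ^ n) i j) (S i j) := by
    intro i j
    have E : Matrix (Fin d) (Fin d) ℝ →L[ℝ] ℝ :=
      LinearMap.toContinuousLinearMap (Matrix.entryLinearMap ℝ ℝ i j)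
    exact (LinearMap.toContinuousLinearMap (Matrix.entryLinearMap ℝ ℝ i j)).hasSum
      hsummable.hasSum
  have hTpow : ∀ n (i j : Fin d), (T ^ n) i j = c ^ n * (W ^ n) i j := by
    intro n i j
    rw [hT, smul_pow, Matrix.smul_apply, smul_eq_mul]
  have hterm_nn : ∀ n (i j : Fin d), 0 ≤ (T ^ n) i j := by
    intro n i j
    rw [hTpow]
    exact mul_nonneg (pow_nonneg hc0.le n) (hpow_nn n i j)
  have hSnn : ∀ i j, 0 ≤ S i j := fun i j =>
    hasSum_le (fun n => hterm_nn n i j) hasSum_zero (hEntry i j)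
  -- combinatorial characterization
  have walk_of_pow : ∀ n (i j : Fin d), 0 < (W ^ n) i j →
      Relation.ReflTransGen (fun p q => W p q = 1) i j := by
    intro n
    induction n with
    | zero =>
      intro i j h
      by_cases hij : i = j
      · exact hij ▸ Relation.ReflTransGen.refl
      · simp [Matrix.one_apply, hij] at h
    | succ n ih =>
      intro i j h
      rw [pow_succ, Matrix.mul_apply] at h
      have : ∃ k, 0 < (W ^ n) i k * W k j := by
        by_contra hcon
        push_neg at hcon
        have : ∑ k, (W ^ n) i k * W k j ≤ 0 :=
          Finset.sum_nonpos fun k _ => hcon k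
        linarith
      obtain ⟨k, hk⟩ := this
      have h1 : 0 < (W ^ n) i k := by
        rcases (hpow_nn n i k).lt_or_eq with h' | h'
        · exact h'
        · rw [← h'] at hk; simp at hk
      have h2 : W k j = 1 := by
        rcases hbin k j with h' | h'
        · rw [h'] at hk; simp at hk
        · exact h'
      exact Relation.ReflTransGen.tail (ih i k h1) h2
  have pow_of_walk : ∀ i j : Fin d, Relation.ReflTransGen (fun p q => W p q = 1) i j →
      ∃ n, 0 < (W ^ n) i j := by
    intro i j h
    induction h with
    | refl => exact ⟨0, by simp [Matrix.one_apply_eq]⟩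
    | @tail k j hik hkj ih =>
      obtain ⟨n, hn⟩ := ih
      refine ⟨n + 1, ?_⟩
      rw [pow_succ, Matrix.mul_apply]
      have hle : (W ^ n) i k * W k j ≤ ∑ m, (W ^ n) i m * W m j :=
        Finset.single_le_sum (f := fun m => (W ^ n) i m * W m j)
          (fun m _ => mul_nonneg (hpow_nn n i m) (hWnn m j)) (Finset.mem_univ k)
      have : 0 < (W ^ n) i k * W k j := by
        rw [hkj, mul_one]; exact hn
      linarith
  refine ⟨hUnit, ?_, ?_⟩
  · intro i j
    rw [hinv, hB, Matrix.smul_apply, smul_eq_mul]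
    exact mul_nonneg hc0.le (hSnn i j)
  · intro i j
    rw [hinv, hB, Matrix.smul_apply, smul_eq_mul]
    constructor
    · intro hpos
      have hSpos : 0 < S i j := by
        by_contra hcon
        push_neg at hcon
        nlinarith
      have : ∃ n, 0 < (T ^ n) i j := by
        by_contra hcon
        push_neg at hcon
        have hz : ∀ n, (T ^ n) i j = 0 := fun n =>
          le_antisymm (hcon n) (hterm_nn n i j)
        have : S i j = 0 := by
          have := (hEntry i j).tsum_eq
          rw [← this]
          simp [hz]
        linarith
      obtain ⟨n, hn⟩ := this
      rw [hTpow] at hn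
      have : 0 < (W ^ n) i j := by
        by_contra h'
        push_neg at h'
        have := hpow_nn n i j
        have : (W ^ n) i j = 0 := le_antisymm h' this
        rw [this, mul_zero] at hn
        exact lt_irrefl 0 hn
      exact walk_of_pow n i j this
    · intro hwalk
      obtain ⟨n, hn⟩ := pow_of_walk i j hwalk
      have hterm : 0 < (T ^ n) i j := by
        rw [hTpow]
        exact mul_pos (pow_pos hc0 n) hn
      have hSge : (T ^ n) i j ≤ S i j := by
        rw [← (hEntry i j).tsum_eq]
        exact Summable.le_tsum (hEntry i j).summable n (fun m _ => hterm_nn m i j)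
      exact mul_pos hc0 (lt_of_lt_of_le hterm hSge)
end

section
/- Partial closure is idempotent and commutative: for a reflexive 0-1 edge matrix 𝓜 and indices k, l, zer_{\{k\}}(zer_{\{k\}} 𝓜) = zer_{\{k\}} 𝓜 and zer_{\{k\}}(zer_{\{l\}} 𝓜) = zer_{\{l\}}(zer_{\{k\}} 𝓜). -/
/-- Partial closure at a single index `k` of a reflexive 0-1 edge matrix:
entries in row or column `k` are unchanged; any other entry `(i,j)` becomes
`In[M_{ij} + M_{ik} M_{kj}]`. -/
def zer {d : ℕ} (k : Fin d) (M : Matrix (Fin d) (Fin d) ℕ) :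
    Matrix (Fin d) (Fin d) ℕ :=
  Matrix.of fun i j =>
    if i = k ∨ j = k then M i j
    else if 0 < M i j + M i k * M k j then 1 else 0

lemma zer_eq {d : ℕ} (M : Matrix (Fin d) (Fin d) ℕ)
    (hdiag : ∀ i, M i i = 1) (hbin : ∀ i j, M i j = 0 ∨ M i j = 1)
    (k i j : Fin d) :
    zer k M i j = if 0 < M i j ∨ (0 < M i k ∧ 0 < M k j) then 1 else 0 := by
  simp only [zer, Matrix.of_apply]
  rcases eq_or_ne i k with rfl | hi
  · have hd := hdiag i
    rcases hbin i j with h | h <;> simp [h, hd]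
  rcases eq_or_ne j k with rfl | hj
  · have hd := hdiag j
    rcases hbin i j with h | h <;> simp [h, hd]
  simp only [hi, hj, or_self, if_false, add_pos_iff, Nat.pos_iff_ne_zero, Nat.mul_ne_zero_iff]

lemma zer_diag {d : ℕ} (M : Matrix (Fin d) (Fin d) ℕ)
    (hdiag : ∀ i, M i i = 1) (hbin : ∀ i j, M i j = 0 ∨ M i j = 1)
    (k i : Fin d) : zer k M i i = 1 := by
  rw [zer_eq M hdiag hbin]
  simp [hdiag i]

lemma zer_bin {d : ℕ} (M : Matrix (Fin d) (Fin d) ℕ)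
    (hdiag : ∀ i, M i i = 1) (hbin : ∀ i j, M i j = 0 ∨ M i j = 1)
    (k i j : Fin d) : zer k M i j = 0 ∨ zer k M i j = 1 := by
  rw [zer_eq M hdiag hbin]
  split <;> simp

lemma pos_ite (P : Prop) [Decidable P] :
    (0 < if P then (1:ℕ) else 0) ↔ P := by split <;> simp_all

/-- Partial closure is idempotent and commutative: for a reflexive 0-1 edge
matrix `M` and indices `k`, `l`, `zer_{k}(zer_{k} M) = zer_{k} M` and
`zer_{k}(zer_{l} M) = zer_{l}(zer_{k} M)`. -/
theorem zer_idem_and_comm {d : ℕ} (M : Matrix (Fin d) (Fin d) ℕ)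
    (hdiag : ∀ i, M i i = 1) (hbin : ∀ i j, M i j = 0 ∨ M i j = 1)
    (k l : Fin d) :
    zer k (zer k M) = zer k M ∧ zer k (zer l M) = zer l (zer k M) := by
  constructor <;> ext i j
  · rw [zer_eq (zer k M) (zer_diag M hdiag hbin k) (zer_bin M hdiag hbin k),
      zer_eq M hdiag hbin, zer_eq M hdiag hbin, zer_eq M hdiag hbin,
]
    simp only [pos_ite]
    have hd := hdiag k
    by_cases h1 : 0 < M i j <;> by_cases h2 : 0 < M i k <;>
      by_cases h3 : 0 < M k j <;> simp_all
  · rw [zer_eq (zer l M) (zer_diag M hdiag hbin l) (zer_bin M hdiag hbin l),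
      zer_eq (zer k M) (zer_diag M hdiag hbin k) (zer_bin M hdiag hbin k),
      zer_eq M hdiag hbin, zer_eq M hdiag hbin, zer_eq M hdiag hbin,
      zer_eq M hdiag hbin, zer_eq M hdiag hbin, zer_eq M hdiag hbin,
]
    simp only [pos_ite]
    have hdk := hdiag k; have hdl := hdiag l
    by_cases h1 : 0 < M i j <;> by_cases h2 : 0 < M i k <;>
      by_cases h3 : 0 < M k j <;> by_cases h4 : 0 < M i l <;>
      by_cases h5 : 0 < M l j <;> by_cases h6 : 0 < M k l <;>
      by_cases h7 : 0 < M l k <;> simp_all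
end
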